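/- (Dyadic chaining) Let F : [a, b] → ℝ be continuous, and suppose that for every r ≥ 1 and every 0 ≤ n < 2^r, |F(a + (n+1)(b-a)/2^r) - F(a + n(b-a)/2^r)| ≤ λ_r, where λ_r ≥ 0 with ∑_r λ_r < ∞. Then for every σ ∈ [a, b], |F(σ) - F(a)| ≤ 2 ∑_{r=1}^∞ λ_r. -/

import Mathlib

theorem stmt_16 (a b : ℝ) (hab : a < b) (F : ℝ → ℝ)
    (hF : ContinuousOn F (Set.Icc a b))
    (lam : ℕ → ℝ) (hlam : ∀ r, 0 ≤ lam r) (hsum : Summable lam)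
    (hstep : ∀ r : ℕ, 1 ≤ r → ∀ n : ℕ, n < 2 ^ r →
      |F (a + ((n : ℝ) + 1) * (b - a) / 2 ^ r) - F (a + (n : ℝ) * (b - a) / 2 ^ r)| ≤ lam r) :
    ∀ σ ∈ Set.Icc a b, |F σ - F a| ≤ 2 * ∑' r : ℕ, lam (r + 1) := by
  have hba : (0:ℝ) < b - a := sub_pos.2 hab
  have hsum' : Summable (fun r => lam (r+1)) := (summable_nat_add_iff 1).2 hsum
  -- dyadic bound
  have key : ∀ r : ℕ, 1 ≤ r → ∀ n : ℕ, n ≤ 2 ^ r →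
      |F (a + (n : ℝ) * (b - a) / 2 ^ r) - F a| ≤ 2 * ∑ k ∈ Finset.range r, lam (k + 1) := by
    intro r hr
    induction r, hr using Nat.le_induction with
    | base =>
      intro n hn
      have hsumr : ∑ k ∈ Finset.range 1, lam (k+1) = lam 1 := by simp
      rw [hsumr]
      have hl := hlam 1
      have hs0 := hstep 1 le_rfl 0 (by norm_num)
      have hs1 := hstep 1 le_rfl 1 (by norm_num)
      have c0 : ((0:ℕ):ℝ) = 0 := by norm_num
      have c1 : ((1:ℕ):ℝ) = 1 := by norm_num
      have c2 : ((2:ℕ):ℝ) = 2 := by norm_num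
      rw [c0] at hs0; rw [c1] at hs1
      have e0 : a + (0:ℝ)*(b-a)/2^1 = a := by ring
      have e01 : a + ((0:ℝ)+1)*(b-a)/2^1 = a + (1:ℝ)*(b-a)/2^1 := by ring
      have e12 : a + ((1:ℝ)+1)*(b-a)/2^1 = a + (2:ℝ)*(b-a)/2^1 := by ring
      rw [e0, e01] at hs0; rw [e12] at hs1
      interval_cases n
      · rw [c0, e0]; simp only [sub_self, abs_zero]; linarith
      · rw [c1]; linarith
      · rw [c2]
        calc |F (a + (2:ℝ)*(b-a)/2^1) - F a|
            ≤ |F (a + (2:ℝ)*(b-a)/2^1) - F (a + (1:ℝ)*(b-a)/2^1)|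
              + |F (a + (1:ℝ)*(b-a)/2^1) - F a| := abs_sub_le _ _ _
          _ ≤ lam 1 + lam 1 := add_le_add hs1 hs0
          _ = 2 * lam 1 := by ring
    | succ r hr ih =>
      intro n hn
      have hsucc : ∑ k ∈ Finset.range (r+1), lam (k+1)
          = ∑ k ∈ Finset.range r, lam (k+1) + lam (r+1) := Finset.sum_range_succ _ _
      rcases Nat.even_or_odd n with ⟨m, hm⟩ | ⟨m, hm⟩
      · -- n = m + m
        have hm2 : m ≤ 2 ^ r := by
          have : n ≤ 2 * 2 ^ r := by rw [pow_succ] at hn; omega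
          omega
        have heq : a + (n : ℝ) * (b - a) / 2 ^ (r+1) = a + (m : ℝ) * (b - a) / 2 ^ r := by
          subst hm; push_cast [pow_succ]; ring
        rw [heq, hsucc]
        have := ih m hm2
        have := hlam (r+1)
        linarith
      · -- n = 2m + 1
        have hm2 : m < 2 ^ r := by
          have : n ≤ 2 * 2 ^ r := by rw [pow_succ] at hn; omega
          omega
        have h2m : 2 * m < 2 ^ (r+1) := by rw [pow_succ]; omega
        have hs := hstep (r+1) (by omega) (2*m) h2m
        have hcast : ((n:ℕ):ℝ) = ((2*m:ℕ):ℝ) + 1 := by subst hm; push_cast; ring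
        have heq : a + ((2*m:ℕ) : ℝ) * (b - a) / 2 ^ (r+1) = a + (m : ℝ) * (b - a) / 2 ^ r := by
          push_cast [pow_succ]; ring
        rw [hcast]
        calc |F (a + (((2*m:ℕ):ℝ) + 1) * (b - a) / 2 ^ (r+1)) - F a|
            ≤ |F (a + (((2*m:ℕ):ℝ) + 1) * (b - a) / 2 ^ (r+1))
                - F (a + ((2*m:ℕ):ℝ) * (b - a) / 2 ^ (r+1))|
              + |F (a + ((2*m:ℕ):ℝ) * (b - a) / 2 ^ (r+1)) - F a| := abs_sub_le _ _ _
          _ ≤ lam (r+1) + 2 * ∑ k ∈ Finset.range r, lam (k+1) := by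
              refine add_le_add hs ?_
              rw [heq]; exact ih m hm2.le
          _ ≤ 2 * ∑ k ∈ Finset.range (r+1), lam (k+1) := by
              rw [hsucc]; have := hlam (r+1); linarith
  -- pass to limit
  intro σ hσ
  obtain ⟨hσa, hσb⟩ := hσ
  set t : ℝ := (σ - a) / (b - a) with ht_def
  have ht0 : 0 ≤ t := div_nonneg (by linarith) hba.le
  have ht1 : t ≤ 1 := (div_le_one hba).2 (by linarith)
  have hσt : σ - a = t * (b - a) := by rw [ht_def, div_mul_cancel₀ _ hba.ne']
  set x : ℕ → ℝ := fun r => a + (⌊(2:ℝ)^r * t⌋₊ : ℝ) * (b - a) / 2 ^ r with hx_def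
  have hfl_le : ∀ r : ℕ, (⌊(2:ℝ)^r * t⌋₊ : ℝ) ≤ 2 ^ r * t := fun r =>
    Nat.floor_le (by positivity)
  have hfl_lt : ∀ r : ℕ, (2:ℝ)^r * t < (⌊(2:ℝ)^r * t⌋₊ : ℝ) + 1 := fun r =>
    Nat.lt_floor_add_one _
  have hfl_n : ∀ r : ℕ, ⌊(2:ℝ)^r * t⌋₊ ≤ 2 ^ r := by
    intro r
    have h1 : (2:ℝ)^r * t ≤ ((2^r : ℕ) : ℝ) := by
      push_cast
      nlinarith [pow_pos (by norm_num : (0:ℝ) < 2) r]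
    calc ⌊(2:ℝ)^r * t⌋₊ ≤ ⌊((2^r : ℕ) : ℝ)⌋₊ := Nat.floor_mono h1
      _ = 2 ^ r := Nat.floor_natCast _
  have hx_mem : ∀ r : ℕ, x r ∈ Set.Icc a b := by
    intro r
    have hp : (0:ℝ) < 2 ^ r := by positivity
    constructor
    · have : (0:ℝ) ≤ (⌊(2:ℝ)^r * t⌋₊ : ℝ) * (b - a) / 2 ^ r := by positivity
      simp only [hx_def]; linarith
    · have h1 : (⌊(2:ℝ)^r * t⌋₊ : ℝ) * (b - a) / 2 ^ r ≤ t * (b - a) := by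
        rw [div_le_iff₀ hp]
        nlinarith [hfl_le r]
      simp only [hx_def]
      linarith [hσt ▸ h1]
  have hx_le : ∀ r : ℕ, x r ≤ σ := by
    intro r
    have hp : (0:ℝ) < 2 ^ r := by positivity
    have h1 : (⌊(2:ℝ)^r * t⌋₊ : ℝ) * (b - a) / 2 ^ r ≤ t * (b - a) := by
      rw [div_le_iff₀ hp]
      nlinarith [hfl_le r]
    simp only [hx_def]; linarith [hσt ▸ h1]
  have hx_close : ∀ r : ℕ, σ - x r ≤ (b - a) / 2 ^ r := by
    intro r
    have hp : (0:ℝ) < 2 ^ r := by positivity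
    rw [le_div_iff₀ hp]
    have hd : (⌊(2:ℝ)^r * t⌋₊ : ℝ) * (b - a) / 2 ^ r * 2 ^ r
        = (⌊(2:ℝ)^r * t⌋₊ : ℝ) * (b - a) := by field_simp
    simp only [hx_def]
    nlinarith [hfl_lt r, hd, hσt]
  have hx_tendsto : Filter.Tendsto x Filter.atTop (nhds σ) := by
    have h0 : Filter.Tendsto (fun r : ℕ => (b - a) / 2 ^ r) Filter.atTop (nhds 0) := by
      simpa using (tendsto_pow_atTop_nhds_zero_of_lt_one (by norm_num : (0:ℝ) ≤ 1/2)
        (by norm_num : (1:ℝ)/2 < 1)).const_mul (b - a) |>.congr (by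
          intro r; rw [div_pow, one_pow]; ring)
    rw [tendsto_iff_dist_tendsto_zero]
    refine squeeze_zero (fun r => dist_nonneg) (fun r => ?_) h0
    rw [Real.dist_eq, abs_of_nonpos (by linarith [hx_le r]), neg_sub]
    exact hx_close r
  have hFx : Filter.Tendsto (fun r => F (x r)) Filter.atTop (nhds (F σ)) := by
    have := (hF σ ⟨hσa, hσb⟩).tendsto
    exact this.comp (tendsto_nhdsWithin_iff.mpr
      ⟨hx_tendsto, Filter.Eventually.of_forall hx_mem⟩)
  have habs : Filter.Tendsto (fun r => |F (x r) - F a|) Filter.atTop (nhds |F σ - F a|) :=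
    (hFx.sub tendsto_const_nhds).abs
  refine le_of_tendsto habs ?_
  filter_upwards [Filter.eventually_ge_atTop 1] with r hr
  calc |F (x r) - F a| ≤ 2 * ∑ k ∈ Finset.range r, lam (k + 1) := key r hr _ (hfl_n r)
    _ ≤ 2 * ∑' k : ℕ, lam (k + 1) := by
        have := Summable.sum_le_tsum (Finset.range r) (fun i _ => hlam (i+1)) hsum'
        linarith
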